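/- Let {𝓗,Γ} be an AB-generalized boundary pair for A* with γ-field γ and Weyl function M, fix μ ∈ ℂ∖ℝ, set E := ½(M(μ) + M(conj μ)) on ran Γ₀ (a densely defined symmetric operator) and let M₀(λ) be the closure of M(λ) − E (so M₀ ∈ R[𝓗]). Then: (i) ker(clos γ(λ)) = ker M₀(λ), and this kernel is independent of λ ∈ ℂ∖ℝ; (ii) the Krein-orthogonal complement of ran Γ in 𝓗×𝓗 satisfies (ran Γ)^[⊥] = {(k, E*k) : k ∈ dom E* ∩ ker(clos γ(λ))}; in particular, ran Γ is dense in 𝓗×𝓗 if and only if dom E* ∩ ker(clos γ(λ)) = {0} for some (equivalently, for every) λ ∈ ℂ∖ℝ; (iii) Γ is single-valued if and only if mul Γ₀ = {0}, equivalently if and only if ker γ(λ) = {0} for λ ∈ ℂ∖ℝ. -/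

import Mathlib

noncomputable section

open Filter Topology

namespace BT

local notation "⟪" x ", " y "⟫" => @inner ℂ _ _ x y

section Ops
variable {α β γ' : Type*}

def domR (T : Set (α × β)) : Set α := {x | ∃ y, (x, y) ∈ T}
def ranR (T : Set (α × β)) : Set β := {y | ∃ x, (x, y) ∈ T}
def kerR [Zero β] (T : Set (α × β)) : Set α := {x | (x, (0 : β)) ∈ T}
def mulR [Zero α] (T : Set (α × β)) : Set β := {y | ((0 : α), y) ∈ T}
def invR (T : Set (α × β)) : Set (β × α) := {p | (p.2, p.1) ∈ T}
def compR (T₂ : Set (β × γ')) (T₁ : Set (α × β)) : Set (α × γ') :=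
  {p | ∃ y, (p.1, y) ∈ T₁ ∧ (y, p.2) ∈ T₂}
def csum [Add α] [Add β] (T₁ T₂ : Set (α × β)) : Set (α × β) :=
  {p | ∃ q ∈ T₁, ∃ r ∈ T₂, p = (q.1 + r.1, q.2 + r.2)}

def IsLinRel {M : Type*} [AddCommGroup M] [Module ℂ M] (s : Set M) : Prop :=
  ∃ p : Submodule ℂ M, (p : Set M) = s

def IsBddRel [Norm α] [Norm β] (T : Set (α × β)) : Prop :=
  ∃ C : ℝ, ∀ p ∈ T, ‖p.2‖ ≤ C * ‖p.1‖

def BddInv [NormedAddCommGroup α] (T : Set (α × α)) : Prop :=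
  (∀ v, ∃ p ∈ T, p.2 = v) ∧ (∀ p ∈ T, ∀ q ∈ T, p.2 = q.2 → p.1 = q.1) ∧
    ∃ C : ℝ, ∀ p ∈ T, ‖p.1‖ ≤ C * ‖p.2‖
end Ops

section Shifts
variable {α : Type*} [AddCommGroup α] [Module ℂ α]

def shiftSub (T : Set (α × α)) (l : ℂ) : Set (α × α) :=
  {p | ∃ q ∈ T, p = (q.1, q.2 - l • q.1)}
def shiftAdd (T : Set (α × α)) (l : ℂ) : Set (α × α) :=
  {p | ∃ q ∈ T, p = (q.1, q.2 + l • q.1)}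
def hatN (T : Set (α × α)) (l : ℂ) : Set (α × α) := {p ∈ T | p.2 = l • p.1}
def Nlam (T : Set (α × α)) (l : ℂ) : Set α := {f | (f, l • f) ∈ T}
def Hrel (A0s : Set (α × α)) (l : ℂ) : Set (α × (α × α)) :=
  {q | q.2 ∈ A0s ∧ q.2.2 - l • q.2.1 = q.1}
end Shifts

section InnerDefs
variable {E F : Type*} [NormedAddCommGroup E] [InnerProductSpace ℂ E]
  [NormedAddCommGroup F] [InnerProductSpace ℂ F]

def adjR (S : Set (F × E)) : Set (E × F) :=
  {p | ∀ q ∈ S, ⟪p.1, q.2⟫ = ⟪p.2, q.1⟫}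

def IsClosedSymRel (A : Set (E × E)) : Prop :=
  IsLinRel A ∧ IsClosed A ∧ A ⊆ adjR A

def kIP (p q : E × E) : ℂ := -Complex.I * ⟪q.1, p.2⟫ + Complex.I * ⟪q.2, p.1⟫

def kreinOrth (S : Set (E × E)) : Set (E × E) := {v | ∀ u ∈ S, kIP u v = 0}

def GreenPair (Γ : Set ((E × E) × (F × F))) : Prop :=
  ∀ p ∈ Γ, ∀ q ∈ Γ,
    ⟪q.1.1, p.1.2⟫ - ⟪q.1.2, p.1.1⟫ = ⟪q.2.1, p.2.2⟫ - ⟪q.2.2, p.2.1⟫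

def G0 (Γ : Set ((E × E) × (F × F))) : Set ((E × E) × F) := {p | ∃ h', (p.1, (p.2, h')) ∈ Γ}
def G1 (Γ : Set ((E × E) × (F × F))) : Set ((E × E) × F) := {p | ∃ h, (p.1, (h, p.2)) ∈ Γ}
def A0 (Γ : Set ((E × E) × (F × F))) : Set (E × E) := kerR (G0 Γ)
def A1 (Γ : Set ((E × E) × (F × F))) : Set (E × E) := kerR (G1 Γ)
def weyl (Γ : Set ((E × E) × (F × F))) (l : ℂ) : Set (F × F) :=
  {p | ∃ f : E, ((f, l • f), p) ∈ Γ}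
def gfield (Γ : Set ((E × E) × (F × F))) (l : ℂ) : Set (F × E) :=
  {p | ∃ h', ((p.2, l • p.2), (p.1, h')) ∈ Γ}

def kreinAdj (Γ : Set ((E × E) × (F × F))) : Set ((F × F) × (E × E)) :=
  {q | ∀ p ∈ Γ, kIP p.1 q.2 = kIP p.2 q.1}

def IsIsomPair (A : Set (E × E)) (Γ : Set ((E × E) × (F × F))) : Prop :=
  IsLinRel Γ ∧ domR Γ ⊆ adjR A ∧ GreenPair Γ
def IsDomDense (A : Set (E × E)) (Γ : Set ((E × E) × (F × F))) : Prop :=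
  closure (domR Γ) = adjR A
def IsABPair (A : Set (E × E)) (Γ : Set ((E × E) × (F × F))) : Prop :=
  IsIsomPair A Γ ∧ IsDomDense A Γ ∧ Dense (ranR (G0 Γ)) ∧ A0 Γ = adjR (A0 Γ)
def IsBPair (A : Set (E × E)) (Γ : Set ((E × E) × (F × F))) : Prop :=
  IsABPair A Γ ∧ ranR (G0 Γ) = Set.univ
def IsUnitaryPair (A : Set (E × E)) (Γ : Set ((E × E) × (F × F))) : Prop :=
  GreenPair Γ ∧ domR Γ ⊆ adjR A ∧ IsDomDense A Γ ∧ invR Γ = kreinAdj Γ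
def IsUnitaryBT (A : Set (E × E)) (Γ : Set ((E × E) × (F × F))) : Prop :=
  IsUnitaryPair A Γ ∧ mulR Γ = {0}
def IsOrdinaryBT (A : Set (E × E)) (Γ : Set ((E × E) × (F × F))) : Prop :=
  IsIsomPair A Γ ∧ mulR Γ = {0} ∧ domR Γ = adjR A ∧ ranR Γ = Set.univ

def Erel (Γ : Set ((E × E) × (F × F))) (m : ℂ) : Set (F × F) :=
  {p | ∃ u' v', (p.1, u') ∈ weyl Γ m ∧ (p.1, v') ∈ weyl Γ ((starRingEnd ℂ) m) ∧
        p.2 = (2 : ℂ)⁻¹ • (u' + v')}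

def triTransform (Γ : Set ((E × E) × (F × F))) (e : Set (F × F)) :
    Set ((E × E) × (F × F)) :=
  {q | ∃ h h' w, (q.1, (h, h')) ∈ Γ ∧ (h, w) ∈ e ∧ q.2 = (h, w + h')}

def formVal (l : ℂ) (u u' : F) : ℝ :=
  ((l - (starRingEnd ℂ) l)⁻¹ * (⟪u, u'⟫ - ⟪u', u⟫)).re

def FormClosable (l : ℂ) (Ms : Set (F × F)) : Prop :=
  ∀ u u' : ℕ → F, (∀ n, (u n, u' n) ∈ Ms) →
    Tendsto u atTop (nhds (0 : F)) →
    Tendsto (fun nm : ℕ × ℕ => formVal l (u nm.1 - u nm.2) (u' nm.1 - u' nm.2)) atTop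
      (nhds (0 : ℝ)) →
    Tendsto (fun n => formVal l (u n) (u' n)) atTop (nhds (0 : ℝ))

def formClosureDom (l : ℂ) (Ms : Set (F × F)) : Set F :=
  {v | ∃ u u' : ℕ → F, (∀ n, (u n, u' n) ∈ Ms) ∧ Tendsto u atTop (nhds v) ∧
    Tendsto (fun nm : ℕ × ℕ => formVal l (u nm.1 - u nm.2) (u' nm.1 - u' nm.2)) atTop
      (nhds (0 : ℝ))}

end InnerDefs

section CompleteDefs
variable {F : Type*} [NormedAddCommGroup F] [InnerProductSpace ℂ F] [CompleteSpace F]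

def IsNevFun (M₀ : ℂ → F →L[ℂ] F) : Prop :=
  DifferentiableOn ℂ M₀ {l : ℂ | l.im ≠ 0} ∧
  (∀ l : ℂ, l.im ≠ 0 → M₀ ((starRingEnd ℂ) l) = ContinuousLinearMap.adjoint (M₀ l)) ∧
  (∀ l : ℂ, 0 < l.im → ∀ u, 0 ≤ (⟪u, M₀ l u⟫).im)

def ImOp (Tb : F →L[ℂ] F) : F →L[ℂ] F :=
  ((2 : ℂ) * Complex.I)⁻¹ • (Tb - ContinuousLinearMap.adjoint Tb)

end CompleteDefs

section Basic
variable {M : Type*} [AddCommGroup M] [Module ℂ M] {s : Set M}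

lemma IsLinRel.zero_mem (h : IsLinRel s) : (0 : M) ∈ s := by
  obtain ⟨p, rfl⟩ := h; exact p.zero_mem

lemma IsLinRel.add_mem (h : IsLinRel s) {a b : M} (ha : a ∈ s) (hb : b ∈ s) : a + b ∈ s := by
  obtain ⟨p, rfl⟩ := h; exact p.add_mem ha hb

lemma IsLinRel.sub_mem (h : IsLinRel s) {a b : M} (ha : a ∈ s) (hb : b ∈ s) : a - b ∈ s := by
  obtain ⟨p, rfl⟩ := h; exact p.sub_mem ha hb

end Basic

section Adj
variable {E F : Type*} [NormedAddCommGroup E] [InnerProductSpace ℂ E]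
  [NormedAddCommGroup F] [InnerProductSpace ℂ F]

lemma adjR_isClosed (S : Set (F × E)) : IsClosed (adjR S) := by
  have : adjR S = ⋂ q ∈ S, {p : E × F | ⟪p.1, q.2⟫ = ⟪p.2, q.1⟫} := by
    ext p; simp [adjR]
  rw [this]
  exact isClosed_biInter fun q _ =>
    isClosed_eq (Continuous.inner continuous_fst continuous_const)
      (Continuous.inner continuous_snd continuous_const)

end Adj

section Res
variable {H : Type*} [NormedAddCommGroup H] [InnerProductSpace ℂ H]

lemma sa_sym {S : Set (H × H)} (hS : S = adjR S) {p : H × H} (hp : p ∈ S) :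
    ⟪p.1, p.2⟫ = ⟪p.2, p.1⟫ := by
  have h2 : p ∈ adjR S := hS ▸ hp
  exact h2 p hp

lemma sa_bound {S : Set (H × H)} (hS : S = adjR S) (z : ℂ) {p : H × H} (hp : p ∈ S) :
    |z.im| * ‖p.1‖ ≤ ‖p.2 - z • p.1‖ := by
  obtain ⟨h, h'⟩ := p
  simp only at *
  have hre : (⟪h, h'⟫ : ℂ).im = 0 := by
    have h1 := sa_sym hS hp
    simp only at h1
    have h2 : ⟪h', h⟫ = (starRingEnd ℂ) ⟪h, h'⟫ := (inner_conj_symm h' h).symm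
    rw [h2] at h1
    have := congrArg Complex.im h1
    simp only [Complex.conj_im] at this
    linarith
  have hc : (⟪h, h' - z • h⟫ : ℂ).im = -(z.im * (‖h‖ ^ 2)) := by
    rw [inner_sub_right, inner_smul_right, inner_self_eq_norm_sq_to_K]
    simp [Complex.mul_im, hre, ← Complex.ofReal_pow]
  have hcs : ‖(⟪h, h' - z • h⟫ : ℂ)‖ ≤ ‖h‖ * ‖h' - z • h‖ := norm_inner_le_norm _ _
  have him : |(⟪h, h' - z • h⟫ : ℂ).im| ≤ ‖(⟪h, h' - z • h⟫ : ℂ)‖ := Complex.abs_im_le_norm _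
  rw [hc] at him
  have key : |z.im| * ‖h‖ ^ 2 ≤ ‖h‖ * ‖h' - z • h‖ := by
    calc |z.im| * ‖h‖ ^ 2 = |(-(z.im * ‖h‖ ^ 2))| := by
          rw [abs_neg, abs_mul, abs_of_nonneg (by positivity : (0:ℝ) ≤ ‖h‖^2)]
      _ ≤ ‖h‖ * ‖h' - z • h‖ := le_trans him hcs
  rcases eq_or_lt_of_le (norm_nonneg h) with h0 | h0
  · simp [← h0]
  · have := mul_le_mul_of_nonneg_left key (le_of_lt (inv_pos.mpr h0))
    calc |z.im| * ‖h‖ = ‖h‖⁻¹ * (|z.im| * ‖h‖ ^ 2) := by field_simp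
      _ ≤ ‖h‖⁻¹ * (‖h‖ * ‖h' - z • h‖) := by
          exact mul_le_mul_of_nonneg_left key (le_of_lt (inv_pos.mpr h0))
      _ = ‖h' - z • h‖ := by field_simp

lemma conj_sub_ne {z : ℂ} (hz : z.im ≠ 0) : (starRingEnd ℂ) z - z ≠ 0 := by
  intro h
  have : (starRingEnd ℂ) z = z := by linear_combination h
  exact hz (Complex.conj_eq_iff_im.mp this)

end Res

section Adj2
variable {E F : Type*} [NormedAddCommGroup E] [InnerProductSpace ℂ E]
  [NormedAddCommGroup F] [InnerProductSpace ℂ F]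

def adjSub (S : Set (F × E)) : Submodule ℂ (E × F) where
  carrier := adjR S
  add_mem' := by
    intro a b ha hb q hq
    rw [Prod.fst_add, Prod.snd_add, inner_add_left, inner_add_left, ha q hq, hb q hq]
  zero_mem' := by
    intro q hq
    simp
  smul_mem' := by
    intro c a ha q hq
    rw [Prod.smul_fst, Prod.smul_snd, inner_smul_left, inner_smul_left, ha q hq]

lemma mem_adjSub {S : Set (F × E)} {p : E × F} : p ∈ adjSub S ↔ p ∈ adjR S := Iff.rfl

end Adj2

section Res2
variable {H : Type*} [NormedAddCommGroup H] [InnerProductSpace ℂ H] [CompleteSpace H]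

lemma sa_ran_eq_top {S : Set (H × H)} (hS : S = adjR S) {z : ℂ} (hz : z.im ≠ 0) (f : H) :
    ∃ p ∈ S, p.2 - z • p.1 = f := by
  classical
  have hPS : ((adjSub S : Submodule ℂ (H × H)) : Set (H × H)) = S := hS.symm
  set lmap : (H × H) →ₗ[ℂ] H := LinearMap.snd ℂ H H - z • LinearMap.fst ℂ H H with hlmap
  have hlval : ∀ q : H × H, lmap q = q.2 - z • q.1 := fun q => rfl
  set R : Submodule ℂ H := (adjSub S).map lmap with hR
  have hmemR : ∀ p ∈ S, p.2 - z • p.1 ∈ R := by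
    intro p hp
    exact Submodule.mem_map.mpr ⟨p, by rw [← hPS] at hp; exact hp, rfl⟩
  have horth : Rᗮ = ⊥ := by
    rw [Submodule.eq_bot_iff]
    intro v hv
    have hv' : ∀ u ∈ R, ⟪u, v⟫ = 0 := (Submodule.mem_orthogonal _ v).mp hv
    have key : (v, (starRingEnd ℂ) z • v) ∈ adjR S := by
      intro q hq
      have h0 : ⟪q.2 - z • q.1, v⟫ = 0 := hv' _ (hmemR q hq)
      rw [inner_sub_left, inner_smul_left] at h0
      have h1 := congrArg (starRingEnd ℂ) h0
      simp only [map_sub, map_mul, inner_conj_symm, RingHomCompTriple.comp_apply,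
        Complex.conj_conj, map_zero, RingHom.id_apply] at h1
      rw [inner_smul_left, Complex.conj_conj]
      linear_combination h1
    have keyS : (v, (starRingEnd ℂ) z • v) ∈ S := by rw [hS]; exact key
    have hsym := sa_sym hS keyS
    simp only [inner_smul_left, inner_smul_right, Complex.conj_conj] at hsym
    have hzero : ((starRingEnd ℂ) z - z) * ⟪v, v⟫ = 0 := by linear_combination hsym
    have := (mul_eq_zero.mp hzero).resolve_left (conj_sub_ne hz)
    exact inner_self_eq_zero.mp this
  have hdense : Dense (R : Set H) :=
    Submodule.dense_iff_topologicalClosure_eq_top.mpr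
      (Submodule.topologicalClosure_eq_top_iff.mpr horth)
  obtain ⟨g, hg, hglim⟩ := mem_closure_iff_seq_limit.mp (hdense f)
  choose p hpP hpl using fun n => Submodule.mem_map.mp (hg n)
  have hCg : CauchySeq g := hglim.cauchySeq
  have hC1 : CauchySeq (fun n => (p n).1) := by
    rw [Metric.cauchySeq_iff] at hCg ⊢
    intro ε hε
    have hzpos : (0:ℝ) < |z.im| := abs_pos.mpr hz
    obtain ⟨N, hN⟩ := hCg (|z.im| * ε) (by positivity)
    refine ⟨N, fun a ha b hb => ?_⟩
    have hmem : p a - p b ∈ adjSub S := Submodule.sub_mem _ (hpP a) (hpP b)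
    have hmemS : p a - p b ∈ S := by rw [← hPS]; exact hmem
    have hb1 := sa_bound hS z hmemS
    have heq2 : (p a - p b).2 - z • (p a - p b).1 = g a - g b := by
      have h1 := hpl a
      have h2 := hpl b
      rw [hlval] at h1 h2
      rw [← h1, ← h2, Prod.snd_sub, Prod.fst_sub, smul_sub]
      abel
    rw [heq2] at hb1
    have hd := hN a ha b hb
    rw [dist_eq_norm] at hd ⊢
    have : ‖(p a - p b).1‖ = ‖(p a).1 - (p b).1‖ := rfl
    rw [this] at hb1
    nlinarith [norm_nonneg ((p a).1 - (p b).1)]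
  obtain ⟨h, hh⟩ := cauchySeq_tendsto_of_complete hC1
  have h2 : Tendsto (fun n => (p n).2) atTop (𝓝 (f + z • h)) := by
    have he : ∀ n, (p n).2 = g n + z • (p n).1 := by
      intro n
      have := hpl n
      rw [hlval] at this
      rw [← this]; abel
    have := hglim.add ((hh.const_smul z))
    exact Tendsto.congr (fun n => (he n).symm) this
  have hlimP : Tendsto (fun n => p n) atTop (𝓝 (h, f + z • h)) := by
    have := Tendsto.prodMk_nhds hh h2
    exact this
  have hclosed : IsClosed S := by rw [hS]; exact adjR_isClosed S
  have hmemS : (h, f + z • h) ∈ S :=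
    hclosed.mem_of_tendsto hlimP (Filter.Eventually.of_forall fun n => by
      rw [← hPS]; exact hpP n)
  refine ⟨(h, f + z • h), hmemS, ?_⟩
  show f + z • h - z • h = f
  rw [add_sub_cancel_right]

end Res2


section GammaLemmas
variable {E F : Type*} [NormedAddCommGroup E] [InnerProductSpace ℂ E] [CompleteSpace E]
  [NormedAddCommGroup F] [InnerProductSpace ℂ F] [CompleteSpace F]
variable {Γ : Set ((E × E) × (F × F))}

lemma conj_im_ne {l : ℂ} (hl : l.im ≠ 0) : ((starRingEnd ℂ) l).im ≠ 0 := by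
  rw [Complex.conj_im]; exact neg_ne_zero.mpr hl

lemma G2 (hG : GreenPair Γ) {l z : ℂ} {f g : E} {u u' v v' : F}
    (hp : ((f, l • f), (u, u')) ∈ Γ) (hq : ((g, z • g), (v, v')) ∈ Γ) :
    (l - (starRingEnd ℂ) z) * ⟪g, f⟫ = ⟪v, u'⟫ - ⟪v', u⟫ := by
  have h : ⟪g, l • f⟫ - ⟪z • g, f⟫ = ⟪v, u'⟫ - ⟪v', u⟫ := hG _ hp _ hq
  rw [inner_smul_right, inner_smul_left] at h
  linear_combination h

lemma dec (hlin : IsLinRel Γ) (hsa : A0 Γ = adjR (A0 Γ)) {l : ℂ} (hl : l.im ≠ 0)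
    {f f' : E} {h h' : F} (hp : ((f, f'), (h, h')) ∈ Γ) :
    ∃ g u' χ, ((g, l • g), (h, u')) ∈ Γ ∧ (∃ q : E × E, (q, ((0 : F), χ)) ∈ Γ) ∧
      h' = u' + χ := by
  obtain ⟨⟨e, e'⟩, he, heq⟩ := sa_ran_eq_top hsa hl (f' - l • f)
  obtain ⟨χ, hχ⟩ := he
  have hsub := hlin.sub_mem hp hχ
  have hpair : ((f, f'), (h, h')) - ((e, e'), ((0 : F), χ))
      = ((f - e, f' - e'), (h, h' - χ)) := by
    simp [Prod.ext_iff]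
  rw [hpair] at hsub
  have hfe : f' - e' = l • (f - e) := by
    have h6 : e' = l • e + (f' - l • f) := by rw [← heq]; abel
    rw [h6, smul_sub]; abel
  rw [hfe] at hsub
  exact ⟨f - e, h' - χ, χ, hsub, ⟨(e, e'), hχ⟩, by abel⟩

lemma weyl_data (hlin : IsLinRel Γ) (hsa : A0 Γ = adjR (A0 Γ)) {l : ℂ} (hl : l.im ≠ 0)
    {x : F} (hx : x ∈ ranR (G0 Γ)) : ∃ g u', ((g, l • g), (x, u')) ∈ Γ := by
  obtain ⟨⟨f, f'⟩, h', hp⟩ := hx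
  obtain ⟨g, u', χ, h1, _, _⟩ := dec hlin hsa hl hp
  exact ⟨g, u', h1⟩

lemma erel_data (hlin : IsLinRel Γ) (hsa : A0 Γ = adjR (A0 Γ)) {m : ℂ} (hm : m.im ≠ 0)
    {x : F} (hx : x ∈ ranR (G0 Γ)) :
    ∃ g a k b, ((g, m • g), (x, a)) ∈ Γ ∧ ((k, (starRingEnd ℂ) m • k), (x, b)) ∈ Γ ∧
      (x, (2 : ℂ)⁻¹ • (a + b)) ∈ Erel Γ m := by
  obtain ⟨g, a, hga⟩ := weyl_data hlin hsa hm hx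
  obtain ⟨k, b, hkb⟩ := weyl_data hlin hsa (conj_im_ne hm) hx
  exact ⟨g, a, k, b, hga, hkb, ⟨a, b, ⟨g, hga⟩, ⟨k, hkb⟩, rfl⟩⟩

lemma Nval {N : ℂ → F →L[ℂ] F} {m l : ℂ}
    (hNc : closure {p : F × F | ∃ u' w, (p.1, u') ∈ weyl Γ l ∧ (p.1, w) ∈ Erel Γ m ∧
        p.2 = u' - w} = {p : F × F | p.2 = N l p.1})
    {x u' w : F} (hu : (x, u') ∈ weyl Γ l) (hw : (x, w) ∈ Erel Γ m) :
    N l x = u' - w := by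
  have hmem : (x, u' - w) ∈ closure {p : F × F | ∃ u' w, (p.1, u') ∈ weyl Γ l ∧
      (p.1, w) ∈ Erel Γ m ∧ p.2 = u' - w} := subset_closure ⟨u', w, hu, hw, rfl⟩
  rw [hNc] at hmem
  exact hmem.symm

lemma key_id (hG : GreenPair Γ) {l m : ℂ} {y g k ψ χ : E} {x u' a b v c d : F}
    (hu : ((y, l • y), (x, u')) ∈ Γ)
    (hga : ((g, m • g), (x, a)) ∈ Γ)
    (hkb : ((k, (starRingEnd ℂ) m • k), (x, b)) ∈ Γ)
    (hψ : ((ψ, m • ψ), (v, c)) ∈ Γ)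
    (hχ : ((χ, (starRingEnd ℂ) m • χ), (v, d)) ∈ Γ) :
    ⟪v, u' - (2 : ℂ)⁻¹ • (a + b)⟫
      = (2 : ℂ)⁻¹ * ((l - (starRingEnd ℂ) m) * ⟪ψ, y⟫ + (l - m) * ⟪χ, y⟫) := by
  have e1 := G2 hG hu hψ
  have e2 := G2 hG hu hχ
  have e3 := G2 hG hga hχ
  have e4 := G2 hG hkb hψ
  rw [Complex.conj_conj] at e2 e3
  rw [inner_sub_right, inner_smul_right, inner_add_right]
  linear_combination (-(2:ℂ)⁻¹) * e1 - (2:ℂ)⁻¹ * e2 + (2:ℂ)⁻¹ * e3 + (2:ℂ)⁻¹ * e4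

lemma w_sym (hG : GreenPair Γ) {m : ℂ} {g k : E} {x a b : F}
    (hga : ((g, m • g), (x, a)) ∈ Γ) (hkb : ((k, (starRingEnd ℂ) m • k), (x, b)) ∈ Γ) :
    ⟪x, (2 : ℂ)⁻¹ • (a + b)⟫ = ⟪(2 : ℂ)⁻¹ • (a + b), x⟫ := by
  have e1 := G2 hG hga hkb
  have e2 := G2 hG hkb hga
  rw [Complex.conj_conj] at e1
  rw [inner_smul_right, inner_smul_left, inner_add_right, inner_add_left]
  have hco : (starRingEnd ℂ) (2 : ℂ)⁻¹ = (2 : ℂ)⁻¹ := by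
    rw [map_inv₀, Complex.conj_ofNat]
  rw [hco]
  linear_combination (-(2:ℂ)⁻¹) * e1 - (2:ℂ)⁻¹ * e2

lemma ker_gamma_mono (hlin : IsLinRel Γ) (hsa : A0 Γ = adjR (A0 Γ)) {l z : ℂ}
    (hz : z.im ≠ 0) :
    kerR (closure (gfield Γ l)) ⊆ kerR (closure (gfield Γ z)) := by
  intro u hu
  obtain ⟨q, hqmem, hqlim⟩ := mem_closure_iff_seq_limit.mp hu
  choose h' hΓq using hqmem
  have hsel : ∀ n, ∃ p ∈ A0 Γ, p.2 - z • p.1 = (z - l) • (q n).2 :=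
    fun n => sa_ran_eq_top hsa hz _
  choose e he heq using hsel
  choose χ hχ using fun n => show ∃ h'', ((e n), ((0:F), h'')) ∈ Γ from he n
  have hadd : ∀ n, (((q n).2 + (e n).1, z • ((q n).2 + (e n).1)),
      ((q n).1, h' n + χ n)) ∈ Γ := by
    intro n
    have h1 := hlin.add_mem (hΓq n) (hχ n)
    have hpair : (((q n).2, l • (q n).2), ((q n).1, h' n)) + ((e n), ((0:F), χ n))
        = (((q n).2 + (e n).1, l • (q n).2 + (e n).2), ((q n).1, h' n + χ n)) := by
      simp [Prod.ext_iff]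
    rw [hpair] at h1
    have heq2 : l • (q n).2 + (e n).2 = z • ((q n).2 + (e n).1) := by
      have h6 : (e n).2 = z • (e n).1 + ((z - l) • (q n).2) := by rw [← heq n]; abel
      rw [h6, smul_add, sub_smul]; abel
    rwa [heq2] at h1
  have he1lim : Tendsto (fun n => (e n).1) atTop (𝓝 0) := by
    have hq2lim : Tendsto (fun n => (q n).2) atTop (𝓝 (0 : E)) := by
      have := (continuous_snd.tendsto ((u, (0:E)))).comp hqlim
      exact this
    rw [tendsto_zero_iff_norm_tendsto_zero]
    apply squeeze_zero (fun n => norm_nonneg _) (g := fun n => |z.im|⁻¹ * (‖z - l‖ * ‖(q n).2‖))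
    · intro n
      have hb := sa_bound hsa z (he n)
      rw [heq n, norm_smul] at hb
      have hzpos : (0:ℝ) < |z.im| := abs_pos.mpr hz
      have h2 := mul_le_mul_of_nonneg_left hb (le_of_lt (inv_pos.mpr hzpos))
      calc ‖(e n).1‖ = |z.im|⁻¹ * (|z.im| * ‖(e n).1‖) := by field_simp
        _ ≤ |z.im|⁻¹ * (‖z - l‖ * ‖(q n).2‖) := h2
    · have : Tendsto (fun n => ‖(q n).2‖) atTop (𝓝 0) :=
        tendsto_zero_iff_norm_tendsto_zero.mp hq2lim
      have h2 := this.const_mul ‖z - l‖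
      have h3 := h2.const_mul |z.im|⁻¹
      simpa using h3
  have hylim : Tendsto (fun n => (q n).2 + (e n).1) atTop (𝓝 (0 : E)) := by
    have hq2lim : Tendsto (fun n => (q n).2) atTop (𝓝 (0 : E)) :=
      (continuous_snd.tendsto ((u, (0:E)))).comp hqlim
    simpa using hq2lim.add he1lim
  have hxlim : Tendsto (fun n => (q n).1) atTop (𝓝 u) :=
    (continuous_fst.tendsto ((u, (0:E)))).comp hqlim
  have : (u, (0:E)) ∈ closure (gfield Γ z) := by
    apply mem_closure_of_tendsto (hxlim.prodMk_nhds hylim)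
    exact Filter.Eventually.of_forall fun n => ⟨h' n + χ n, hadd n⟩
  exact this

end GammaLemmas


section MainLemmas
variable {E F : Type*} [NormedAddCommGroup E] [InnerProductSpace ℂ E] [CompleteSpace E]
  [NormedAddCommGroup F] [InnerProductSpace ℂ F] [CompleteSpace F]
variable {Γ : Set ((E × E) × (F × F))} {N : ℂ → F →L[ℂ] F} {m : ℂ}

lemma ker_eq_kerN (hlin : IsLinRel Γ) (hG : GreenPair Γ) (hsa : A0 Γ = adjR (A0 Γ))
    (hdense0 : Dense (ranR (G0 Γ))) (hm : m.im ≠ 0)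
    (hNclos : ∀ l : ℂ, l.im ≠ 0 →
      closure {p : F × F | ∃ u' w, (p.1, u') ∈ weyl Γ l ∧ (p.1, w) ∈ Erel Γ m ∧
          p.2 = u' - w}
        = {p : F × F | p.2 = N l p.1})
    {l : ℂ} (hl : l.im ≠ 0) :
    kerR (closure (gfield Γ l)) = {u : F | N l u = 0} := by
  apply Set.Subset.antisymm
  · intro u hu
    have main : ∀ v ∈ ranR (G0 Γ), ⟪v, N l u⟫ = 0 := by
      intro v hv
      obtain ⟨ψ, c, χ, d, hψ, hχ, _⟩ := erel_data hlin hsa hm hv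
      have hclosed : IsClosed {q : F × E | ⟪v, N l q.1⟫ =
          (2:ℂ)⁻¹ * ((l - (starRingEnd ℂ) m) * ⟪ψ, q.2⟫ + (l - m) * ⟪χ, q.2⟫)} :=
        isClosed_eq (Continuous.inner continuous_const ((N l).continuous.comp continuous_fst))
          (Continuous.mul continuous_const ((Continuous.mul continuous_const
             (Continuous.inner continuous_const continuous_snd)).add
            (Continuous.mul continuous_const
             (Continuous.inner continuous_const continuous_snd))))
      have hsub : gfield Γ l ⊆ {q : F × E | ⟪v, N l q.1⟫ =
          (2:ℂ)⁻¹ * ((l - (starRingEnd ℂ) m) * ⟪ψ, q.2⟫ + (l - m) * ⟪χ, q.2⟫)} := by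
        rintro ⟨x, y⟩ ⟨u'', hmem⟩
        have hxran : x ∈ ranR (G0 Γ) := ⟨(y, l • y), u'', hmem⟩
        obtain ⟨g, a, k, b, hga, hkb, hE⟩ := erel_data hlin hsa hm hxran
        have hNx : N l x = u'' - (2:ℂ)⁻¹ • (a + b) := Nval (hNclos l hl) ⟨y, hmem⟩ hE
        show ⟪v, N l x⟫ = _
        rw [hNx]
        exact key_id hG hmem hga hkb hψ hχ
      have hin := closure_minimal hsub hclosed hu
      simpa using hin
    have hfun : (fun v : F => ⟪v, N l u⟫) = fun _ => (0:ℂ) :=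
      Continuous.ext_on hdense0 (Continuous.inner continuous_id continuous_const)
        continuous_const main
    exact inner_self_eq_zero.mp (congrFun hfun (N l u))
  · intro u hNu
    have hmem : ((u, (0:F)) : F × F) ∈ closure {p : F × F | ∃ u' w,
        (p.1, u') ∈ weyl Γ l ∧ (p.1, w) ∈ Erel Γ m ∧ p.2 = u' - w} := by
      rw [hNclos l hl]
      exact (show N l u = 0 from hNu).symm
    obtain ⟨q, hqS, hqlim⟩ := mem_closure_iff_seq_limit.mp hmem
    simp only [Set.mem_setOf_eq] at hqS
    choose u' w hu' hw hqe using hqS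
    choose y hy using hu'
    have hw2 : ∀ n, ∃ a b, ((q n).1, a) ∈ weyl Γ m ∧
        ((q n).1, b) ∈ weyl Γ ((starRingEnd ℂ) m) ∧ w n = (2:ℂ)⁻¹ • (a + b) :=
      fun n => hw n
    choose a b ha hb hwe using hw2
    choose g hg using ha
    choose k hk using hb
    have hxlim : Tendsto (fun n => (q n).1) atTop (𝓝 u) :=
      (continuous_fst.tendsto _).comp hqlim
    have hslim : Tendsto (fun n => (q n).2) atTop (𝓝 (0:F)) :=
      (continuous_snd.tendsto _).comp hqlim
    have hnm : ∀ n, (l - (starRingEnd ℂ) l) * ⟪y n, y n⟫ =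
        ⟪(q n).1, (q n).2⟫ - ⟪(q n).2, (q n).1⟫ := by
      intro n
      have e0 := G2 hG (hy n) (hy n)
      have ew := w_sym hG (hg n) (hk n)
      have hue : u' n = (q n).2 + (2:ℂ)⁻¹ • (a n + b n) := by
        rw [hqe n, hwe n]; abel
      rw [hue, inner_add_right, inner_add_left] at e0
      linear_combination e0 + ew
    have hll : l - (starRingEnd ℂ) l ≠ 0 := by
      intro hc
      exact conj_sub_ne hl (by linear_combination -hc)
    have hrlim : Tendsto (fun n => (⟪(q n).1, (q n).2⟫ - ⟪(q n).2, (q n).1⟫ : ℂ))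
        atTop (𝓝 0) := by
      have h1 : Tendsto (fun n => (⟪(q n).1, (q n).2⟫ : ℂ)) atTop (𝓝 ⟪u, (0:F)⟫) :=
        Tendsto.inner hxlim hslim
      have h2 : Tendsto (fun n => (⟪(q n).2, (q n).1⟫ : ℂ)) atTop (𝓝 ⟪(0:F), u⟫) :=
        Tendsto.inner hslim hxlim
      simpa using h1.sub h2
    have hyy : Tendsto (fun n => (⟪y n, y n⟫ : ℂ)) atTop (𝓝 0) := by
      have heq : (fun n => (⟪y n, y n⟫ : ℂ)) = fun n =>
          (l - (starRingEnd ℂ) l)⁻¹ * (⟪(q n).1, (q n).2⟫ - ⟪(q n).2, (q n).1⟫) := by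
        funext n
        rw [← hnm n]
        field_simp
      rw [heq]
      simpa using hrlim.const_mul ((l - (starRingEnd ℂ) l)⁻¹)
    have hnorm : Tendsto (fun n => ‖y n‖) atTop (𝓝 0) := by
      have h1 : Tendsto (fun n => ‖(⟪y n, y n⟫ : ℂ)‖) atTop (𝓝 0) := by
        have := (continuous_norm.tendsto (0:ℂ)).comp hyy
        simpa [Function.comp_def] using this
      have h2 : (fun n => ‖(⟪y n, y n⟫ : ℂ)‖) = fun n => ‖y n‖ * ‖y n‖ := by
        funext n
        rw [← inner_self_re_eq_norm (𝕜 := ℂ), inner_self_eq_norm_mul_norm (𝕜 := ℂ)]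
      rw [h2] at h1
      have h3 := (Real.continuous_sqrt.tendsto 0).comp h1
      have h4 : (fun n => Real.sqrt (‖y n‖ * ‖y n‖)) = fun n => ‖y n‖ := by
        funext n
        exact Real.sqrt_mul_self (norm_nonneg _)
      rw [show Real.sqrt 0 = 0 from Real.sqrt_zero] at h3
      rwa [← h4]
      
    have hylim : Tendsto y atTop (𝓝 (0:E)) :=
      tendsto_zero_iff_norm_tendsto_zero.mpr hnorm
    exact mem_closure_of_tendsto (hxlim.prodMk_nhds hylim)
      (Filter.Eventually.of_forall fun n => ⟨u' n, hy n⟩)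

lemma krein_eq (hlin : IsLinRel Γ) (hG : GreenPair Γ) (hsa : A0 Γ = adjR (A0 Γ))
    (hdense0 : Dense (ranR (G0 Γ))) (hm : m.im ≠ 0)
    (hNclos : ∀ l : ℂ, l.im ≠ 0 →
      closure {p : F × F | ∃ u' w, (p.1, u') ∈ weyl Γ l ∧ (p.1, w) ∈ Erel Γ m ∧
          p.2 = u' - w}
        = {p : F × F | p.2 = N l p.1})
    (hadjN : ∀ l : ℂ, l.im ≠ 0 → N ((starRingEnd ℂ) l) = ContinuousLinearMap.adjoint (N l))
    {l : ℂ} (hl : l.im ≠ 0) :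
    kreinOrth (ranR Γ)
      = {p : F × F | p ∈ adjR (Erel Γ m) ∧ p.1 ∈ kerR (closure (gfield Γ l))} := by
  have hindep : ∀ {l₁ l₂ : ℂ}, l₁.im ≠ 0 → l₂.im ≠ 0 →
      kerR (closure (gfield Γ l₁)) = kerR (closure (gfield Γ l₂)) :=
    fun h1 h2 => Set.Subset.antisymm (ker_gamma_mono hlin hsa h2) (ker_gamma_mono hlin hsa h1)
  ext p
  obtain ⟨k, k'⟩ := p
  constructor
  · intro hp
    have hKK : ∀ hh : F × F, hh ∈ ranR Γ → ⟪k, hh.2⟫ = ⟪k', hh.1⟫ := by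
      intro hh hmem
      have h0 : -Complex.I * ⟪k, hh.2⟫ + Complex.I * ⟪k', hh.1⟫ = 0 := hp hh hmem
      have h1 : Complex.I * (⟪k', hh.1⟫ - ⟪k, hh.2⟫) = 0 := by linear_combination h0
      have h2 := (mul_eq_zero.mp h1).resolve_left Complex.I_ne_zero
      linear_combination -h2
    have hadjE : ((k, k') : F × F) ∈ adjR (Erel Γ m) := by
      rintro ⟨q1, q2⟩ ⟨u', v', ⟨g, hg⟩, ⟨kk, hkk⟩, hq2⟩
      have e1 := hKK (q1, u') ⟨(g, m • g), hg⟩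
      have e2 := hKK (q1, v') ⟨(kk, (starRingEnd ℂ) m • kk), hkk⟩
      show ⟪k, q2⟫ = ⟪k', q1⟫
      simp only at hq2
      rw [hq2, inner_smul_right, inner_add_right]
      simp only at e1 e2
      rw [e1, e2]; ring
    refine ⟨hadjE, ?_⟩
    have main : ∀ v ∈ ranR (G0 Γ), ⟪k, N l v⟫ = 0 := by
      intro v hv
      obtain ⟨g, u', hgu⟩ := weyl_data hlin hsa hl hv
      obtain ⟨g2, a, k2, b, hga, hkb, hE⟩ := erel_data hlin hsa hm hv
      have hNv : N l v = u' - (2:ℂ)⁻¹ • (a + b) := Nval (hNclos l hl) ⟨g, hgu⟩ hE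
      rw [hNv, inner_sub_right]
      have e1 := hKK (v, u') ⟨(g, l • g), hgu⟩
      have e2 := hadjE (v, (2:ℂ)⁻¹ • (a + b)) hE
      simp only at e1 e2
      rw [e1, e2]; ring
    have hfun : (fun v : F => ⟪k, N l v⟫) = fun _ => (0:ℂ) :=
      Continuous.ext_on hdense0 (Continuous.inner continuous_const (N l).continuous)
        continuous_const main
    have hadj0 : ContinuousLinearMap.adjoint (N l) k = 0 := by
      have h1 : ∀ v : F, ⟪ContinuousLinearMap.adjoint (N l) k, v⟫ = 0 := fun v => by
        rw [ContinuousLinearMap.adjoint_inner_left]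
        exact congrFun hfun v
      exact inner_self_eq_zero.mp (h1 _)
    have hNc0 : N ((starRingEnd ℂ) l) k = 0 := by rw [hadjN l hl]; exact hadj0
    have hkc : k ∈ kerR (closure (gfield Γ ((starRingEnd ℂ) l))) := by
      rw [ker_eq_kerN hlin hG hsa hdense0 hm hNclos (conj_im_ne hl)]
      exact hNc0
    rw [hindep hl (conj_im_ne hl)]
    exact hkc
  · rintro ⟨hadjE, hker⟩
    rintro ⟨h, h'⟩ ⟨⟨f, f'⟩, hΓp⟩
    obtain ⟨g, u', χ, h1, ⟨⟨e, e'⟩, hχ⟩, hdecomp⟩ := dec hlin hsa hl hΓp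
    have hchi : ⟪k, χ⟫ = 0 := by
      have hclosed : IsClosed {q : F × E |
          ⟪q.1, χ⟫ = ⟪q.2, e'⟫ - (starRingEnd ℂ) l * ⟪q.2, e⟫} :=
        isClosed_eq (Continuous.inner continuous_fst continuous_const)
          ((Continuous.inner continuous_snd continuous_const).sub
            (continuous_const.mul (Continuous.inner continuous_snd continuous_const)))
      have hsub : gfield Γ l ⊆ {q : F × E |
          ⟪q.1, χ⟫ = ⟪q.2, e'⟫ - (starRingEnd ℂ) l * ⟪q.2, e⟫} := by
        rintro ⟨x, y⟩ ⟨hy', hmem2⟩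
        have hgr : ⟪y, e'⟫ - ⟪l • y, e⟫ = ⟪x, χ⟫ - ⟪hy', (0:F)⟫ := hG _ hχ _ hmem2
        rw [inner_smul_left, inner_zero_right] at hgr
        show ⟪x, χ⟫ = _
        linear_combination -hgr
      have hin := closure_minimal hsub hclosed hker
      simpa using hin
    have hran : h ∈ ranR (G0 Γ) := ⟨(g, l • g), u', h1⟩
    obtain ⟨g2, a, k2, b, hga, hkb, hE⟩ := erel_data hlin hsa hm hran
    have hNh : N l h = u' - (2:ℂ)⁻¹ • (a + b) := Nval (hNclos l hl) ⟨g, h1⟩ hE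
    have hkerc : N ((starRingEnd ℂ) l) k = 0 := by
      have hkc : k ∈ kerR (closure (gfield Γ ((starRingEnd ℂ) l))) := by
        rw [← hindep hl (conj_im_ne hl)]
        exact hker
      rwa [ker_eq_kerN hlin hG hsa hdense0 hm hNclos (conj_im_ne hl)] at hkc
    have hNterm : ⟪k, N l h⟫ = 0 := by
      rw [← ContinuousLinearMap.adjoint_inner_left, ← hadjN l hl, hkerc, inner_zero_left]
    have hwterm : ⟪k, (2:ℂ)⁻¹ • (a + b)⟫ = ⟪k', h⟫ := hadjE _ hE
    have hku : ⟪k, u'⟫ = ⟪k', h⟫ := by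
      have hx : ⟪k, N l h⟫ = ⟪k, u'⟫ - ⟪k, (2:ℂ)⁻¹ • (a + b)⟫ := by
        rw [hNh, inner_sub_right]
      rw [hNterm] at hx
      linear_combination -hx + hwterm
    have hfinal : ⟪k, h'⟫ = ⟪k', h⟫ := by
      rw [hdecomp, inner_add_right, hku, hchi, add_zero]
    show -Complex.I * ⟪k, h'⟫ + Complex.I * ⟪k', h⟫ = 0
    rw [hfinal]; ring


lemma dense_iff_krein (hlin : IsLinRel Γ) :
    Dense (ranR Γ) ↔ kreinOrth (ranR Γ) ⊆ {0} := by
  obtain ⟨P, hP⟩ := hlin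
  set e : WithLp 2 (F × F) ≃L[ℂ] F × F := WithLp.prodContinuousLinearEquiv 2 ℂ F F with he
  set K : Submodule ℂ (WithLp 2 (F × F)) :=
    (P.map (LinearMap.snd ℂ (E × E) (F × F))).comap e.toLinearEquiv.toLinearMap with hK
  have hmm : ∀ x : WithLp 2 (F × F), x ∈ K ↔ e x ∈ ranR Γ := by
    intro x
    rw [hK, Submodule.mem_comap]
    constructor
    · intro h
      obtain ⟨y, hy, hxy⟩ := Submodule.mem_map.mp h
      refine ⟨y.1, ?_⟩
      have hyΓ : y ∈ Γ := by rw [← hP]; exact hy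
      have hxy' : y.2 = e x := hxy
      rw [← hxy']
      exact hyΓ
    · rintro ⟨x', hx'⟩
      refine Submodule.mem_map.mpr ⟨(x', e x), ?_, rfl⟩
      show (x', e x) ∈ (P : Set ((E × E) × (F × F)))
      rw [hP]
      exact hx'
  have hdd : Dense (ranR Γ) ↔ Dense (K : Set (WithLp 2 (F × F))) := by
    have hKset : (K : Set (WithLp 2 (F × F))) = ⇑(e.toHomeomorph) ⁻¹' (ranR Γ) :=
      Set.ext fun x => hmm x
    rw [hKset]
    constructor
    · intro hd
      rw [dense_iff_closure_eq, ← Homeomorph.preimage_closure, hd.closure_eq,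
        Set.preimage_univ]
    · intro hd
      rw [dense_iff_closure_eq] at hd ⊢
      rw [← Homeomorph.preimage_closure] at hd
      have himg := congrArg (Set.image ⇑(e.toHomeomorph)) hd
      rwa [Set.image_preimage_eq _ (e.toHomeomorph).surjective, Set.image_univ,
        Homeomorph.range_coe] at himg
  rw [hdd, Submodule.dense_iff_topologicalClosure_eq_top,
    Submodule.topologicalClosure_eq_top_iff]
  constructor
  · intro hbot v hv
    obtain ⟨k, k'⟩ := v
    have hx : e.symm (-k', k) ∈ Kᗮ := by
      rw [Submodule.mem_orthogonal]
      intro u hu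
      have humem : e u ∈ ranR Γ := (hmm u).mp hu
      have h0 : -Complex.I * ⟪k, (e u).2⟫ + Complex.I * ⟪k', (e u).1⟫ = 0 :=
        hv (e u) humem
      have h2 : ⟪k', (e u).1⟫ = ⟪k, (e u).2⟫ := by
        have h1 : Complex.I * (⟪k', (e u).1⟫ - ⟪k, (e u).2⟫) = 0 := by
          linear_combination h0
        exact sub_eq_zero.mp ((mul_eq_zero.mp h1).resolve_left Complex.I_ne_zero)
      have hinner : ⟪u, e.symm (-k', k)⟫
          = ⟪(e u).1, -k'⟫ + ⟪(e u).2, k⟫ := rfl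
      rw [hinner, inner_neg_right]
      have h3 := congrArg (starRingEnd ℂ) h2
      rw [inner_conj_symm, inner_conj_symm] at h3
      linear_combination -h3
    rw [hbot, Submodule.mem_bot] at hx
    have hzero : ((-k', k) : F × F) = 0 := by
      have := congrArg e hx
      rwa [e.apply_symm_apply, map_zero] at this
    have hk : k = 0 := congrArg Prod.snd hzero
    have hk' : k' = 0 := by
      have := congrArg Prod.fst hzero
      simpa [neg_eq_zero] using this
    show ((k, k') : F × F) ∈ ({0} : Set (F × F))
    rw [Set.mem_singleton_iff, hk, hk']
    rfl
  · intro hkr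
    rw [Submodule.eq_bot_iff]
    intro x hx
    have hv : (((e x).2, -(e x).1) : F × F) ∈ kreinOrth (ranR Γ) := by
      intro u hu
      have hw : e.symm u ∈ K := (hmm _).mpr (by rw [e.apply_symm_apply]; exact hu)
      have h0 : ⟪e.symm u, x⟫ = 0 := (Submodule.mem_orthogonal K x).mp hx _ hw
      have hinner : ⟪e.symm u, x⟫ = ⟪u.1, (e x).1⟫ + ⟪u.2, (e x).2⟫ := rfl
      rw [hinner] at h0
      have h3 := congrArg (starRingEnd ℂ) h0
      rw [map_add, inner_conj_symm, inner_conj_symm, map_zero] at h3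
      show -Complex.I * ⟪(e x).2, u.2⟫ + Complex.I * ⟪-(e x).1, u.1⟫ = 0
      rw [inner_neg_left]
      linear_combination (-Complex.I) * h3
    have := hkr hv
    rw [Set.mem_singleton_iff] at this
    have h1 : (e x).2 = 0 := congrArg Prod.fst this
    have h2 : (e x).1 = 0 := by
      have := congrArg Prod.snd this
      simpa [neg_eq_zero] using this
    have hex : e x = 0 := by
      have : e x = ((e x).1, (e x).2) := rfl
      rw [this, h1, h2]
      rfl
    exact e.injective (by rw [hex, map_zero])


lemma ker_gfield_eq_mulG0 (l : ℂ) : kerR (gfield Γ l) = mulR (G0 Γ) := by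
  ext u
  constructor
  · rintro ⟨h', hmem⟩
    rw [smul_zero] at hmem
    exact ⟨h', hmem⟩
  · rintro ⟨h', hmem⟩
    exact ⟨h', by rw [smul_zero]; exact hmem⟩

lemma mulG_iff_mulG0 (hlin : IsLinRel Γ) (hG : GreenPair Γ)
    (hdense0 : Dense (ranR (G0 Γ))) :
    mulR Γ = {(0 : F × F)} ↔ mulR (G0 Γ) = {(0 : F)} := by
  constructor
  · intro hmul
    ext u
    simp only [Set.mem_singleton_iff]
    constructor
    · rintro ⟨h', hm⟩
      have : ((u, h') : F × F) ∈ mulR Γ := hm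
      rw [hmul, Set.mem_singleton_iff] at this
      exact congrArg Prod.fst this
    · rintro rfl
      exact ⟨0, hlin.zero_mem⟩
  · intro hmul
    ext p
    obtain ⟨u, u'⟩ := p
    simp only [Set.mem_singleton_iff]
    constructor
    · intro hm
      have hu : u ∈ mulR (G0 Γ) := ⟨u', hm⟩
      rw [hmul, Set.mem_singleton_iff] at hu
      subst hu
      have hm' : (((0,0) : E × E), (((0 : F), u') : F × F)) ∈ Γ := hm
      have hzero : ∀ v ∈ ranR (G0 Γ), ⟪v, u'⟫ = 0 := by
        rintro v ⟨q, h2, hq⟩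
        have hgr : ⟪q.1, (0:E)⟫ - ⟪q.2, (0:E)⟫ = ⟪v, u'⟫ - ⟪h2, (0:F)⟫ :=
          hG _ hm' _ hq
        rw [inner_zero_right, inner_zero_right, inner_zero_right] at hgr
        linear_combination -hgr
      have hfun : (fun v : F => ⟪v, u'⟫) = fun _ => (0:ℂ) :=
        Continuous.ext_on hdense0 (Continuous.inner continuous_id continuous_const)
          continuous_const hzero
      have : u' = 0 := inner_self_eq_zero.mp (congrFun hfun u')
      rw [this]
      rfl
    · intro hz
      have h1 : u = 0 := congrArg Prod.fst hz
      have h2 : u' = 0 := congrArg Prod.snd hz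
      rw [h1, h2]
      exact hlin.zero_mem


end MainLemmas

variable {E F : Type*} [NormedAddCommGroup E] [InnerProductSpace ℂ E] [CompleteSpace E]
  [NormedAddCommGroup F] [InnerProductSpace ℂ F] [CompleteSpace F]

/-- kernels, the Krein-orthogonal complement of `ran Γ`, and
single-valuedness for an AB-generalized boundary pair with `M = E + M₀`. -/
theorem statement5 (A : Set (E × E)) (Γ : Set ((E × E) × (F × F)))
    (hA : IsClosedSymRel A) (hΓ : IsABPair A Γ)
    (m : ℂ) (hm : m.im ≠ 0)
    (N : ℂ → F →L[ℂ] F) (hN : IsNevFun N)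
    -- `N l` is the closure of `M(l) − E`, where `E = Re M(m)`
    (hNclos : ∀ l : ℂ, l.im ≠ 0 →
      closure {p : F × F | ∃ u' w, (p.1, u') ∈ weyl Γ l ∧ (p.1, w) ∈ Erel Γ m ∧
          p.2 = u' - w}
        = {p : F × F | p.2 = N l p.1}) :
    -- (i)
    (∀ l : ℂ, l.im ≠ 0 → kerR (closure (gfield Γ l)) = {u : F | N l u = 0}) ∧
    (∀ l l' : ℂ, l.im ≠ 0 → l'.im ≠ 0 → {u : F | N l u = 0} = {u : F | N l' u = 0}) ∧
    -- (ii)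
    (∀ l : ℂ, l.im ≠ 0 →
      kreinOrth (ranR Γ) =
        {p : F × F | p ∈ adjR (Erel Γ m) ∧ p.1 ∈ kerR (closure (gfield Γ l))}) ∧
    (Dense (ranR Γ) ↔ ∀ l : ℂ, l.im ≠ 0 →
      domR (adjR (Erel Γ m)) ∩ kerR (closure (gfield Γ l)) ⊆ {(0 : F)}) ∧
    (Dense (ranR Γ) ↔ ∃ l : ℂ, l.im ≠ 0 ∧
      domR (adjR (Erel Γ m)) ∩ kerR (closure (gfield Γ l)) ⊆ {(0 : F)}) ∧
    -- (iii)
    ((mulR Γ = {(0 : F × F)} ↔ mulR (G0 Γ) = {(0 : F)}) ∧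
     (mulR Γ = {(0 : F × F)} ↔ ∀ l : ℂ, l.im ≠ 0 → kerR (gfield Γ l) = {(0 : F)})) := by
  obtain ⟨⟨hlin, hdom, hG⟩, hdomdense, hdense0, hsa⟩ := hΓ
  have hI : (Complex.I).im ≠ 0 := by simp
  have hkerN : ∀ {l : ℂ}, l.im ≠ 0 →
      kerR (closure (gfield Γ l)) = {u : F | N l u = 0} :=
    fun hl => ker_eq_kerN hlin hG hsa hdense0 hm hNclos hl
  have hindep : ∀ {l₁ l₂ : ℂ}, l₁.im ≠ 0 → l₂.im ≠ 0 →
      kerR (closure (gfield Γ l₁)) = kerR (closure (gfield Γ l₂)) :=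
    fun h1 h2 => Set.Subset.antisymm (ker_gamma_mono hlin hsa h2)
      (ker_gamma_mono hlin hsa h1)
  have hkrein : ∀ {l : ℂ}, l.im ≠ 0 → kreinOrth (ranR Γ)
      = {p : F × F | p ∈ adjR (Erel Γ m) ∧ p.1 ∈ kerR (closure (gfield Γ l))} :=
    fun hl => krein_eq hlin hG hsa hdense0 hm hNclos hN.2.1 hl
  have hdiK := dense_iff_krein (Γ := Γ) hlin
  have four : Dense (ranR Γ) ↔ ∀ l : ℂ, l.im ≠ 0 →
      domR (adjR (Erel Γ m)) ∩ kerR (closure (gfield Γ l)) ⊆ {(0 : F)} := by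
    constructor
    · intro hd l hl k hk
      obtain ⟨⟨k', hk'⟩, hker⟩ := hk
      have hmem : ((k, k') : F × F) ∈ kreinOrth (ranR Γ) := by
        rw [hkrein hl]
        exact ⟨hk', hker⟩
      have hz := hdiK.mp hd hmem
      rw [Set.mem_singleton_iff] at hz
      rw [Set.mem_singleton_iff]
      exact congrArg Prod.fst hz
    · intro hall
      rw [hdiK]
      intro p hp
      have hp' := hp
      rw [hkrein hI] at hp'
      obtain ⟨hadjE, hker⟩ := hp'
      have hk1 : p.1 = 0 := by
        have h0 := hall Complex.I hI (⟨⟨p.2, hadjE⟩, hker⟩ :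
          p.1 ∈ domR (adjR (Erel Γ m)) ∩ kerR (closure (gfield Γ Complex.I)))
        rwa [Set.mem_singleton_iff] at h0
      have hk2 : p.2 = 0 := by
        have hzero : ∀ v ∈ ranR (G0 Γ), ⟪p.2, v⟫ = 0 := by
          intro v hv
          obtain ⟨g2, a, k2, b, _, _, hE⟩ := erel_data hlin hsa hm hv
          have h1 : ⟪p.1, (2:ℂ)⁻¹ • (a + b)⟫ = ⟪p.2, v⟫ := hadjE _ hE
          rw [hk1, inner_zero_left] at h1
          exact h1.symm
        have hfun : (fun v : F => ⟪p.2, v⟫) = fun _ => (0:ℂ) :=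
          Continuous.ext_on hdense0 (Continuous.inner continuous_const continuous_id)
            continuous_const hzero
        exact inner_self_eq_zero.mp (congrFun hfun p.2)
      rw [Set.mem_singleton_iff]
      exact Prod.ext hk1 hk2
  refine ⟨fun l hl => hkerN hl, ?_, fun l hl => hkrein hl, four, ?_, ?_, ?_⟩
  · intro l l' hl hl'
    rw [← hkerN hl, ← hkerN hl', hindep hl hl']
  · constructor
    · intro hd
      exact ⟨Complex.I, hI, four.mp hd Complex.I hI⟩
    · rintro ⟨l₀, hl₀, hsub⟩
      apply four.mpr
      intro l hl
      rw [hindep hl hl₀]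
      exact hsub
  · exact mulG_iff_mulG0 hlin hG hdense0
  · have hiff := mulG_iff_mulG0 hlin hG hdense0
    constructor
    · intro h l hl
      rw [ker_gfield_eq_mulG0]
      exact hiff.mp h
    · intro h
      apply hiff.mpr
      have h2 := h Complex.I hI
      rwa [ker_gfield_eq_mulG0] at h2


end BT
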